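/- Let q ≥ 1, let f^h: ℝ^{n_h} → ℝ and f^H: ℝ^{n_H} → ℝ be q-times continuously differentiable, let P: ℝ^{n_H} → ℝ^{n_h} be linear, R = Pᵀ its adjoint (transpose), x_k ∈ ℝ^{n_h}, x₀ = R x_k, and let m^H_q be the corrected lower-level model. Then for every s ∈ ℝ^{n_H}, R ∇_s T^h_q(x_k, Ps) − ∇_s m^H_q(x₀, s) = ∇_s T^H_q(x₀, s) − ∇f^H(x₀ + s), where T^h_q and T^H_q are the q-th order Taylor polynomials of f^h and f^H respectively. In particular ‖R ∇_s T^h_q(x_k, Ps) − ∇_s m^H_q(x₀, s)‖ equals the norm of the Taylor remainder of the gradient of f^H at x₀. -/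

import Mathlib

open scoped BigOperators

/-- The `q`-th order Taylor polynomial of `g` at `x`:
`T_q(x,s) = ∑_{i=0}^{q} (1/i!) Dⁱg(x)[s,…,s]`. -/
noncomputable def taylorPoly {n : ℕ} (q : ℕ) (g : EuclideanSpace ℝ (Fin n) → ℝ)
    (x s : EuclideanSpace ℝ (Fin n)) : ℝ :=
  ∑ i ∈ Finset.range (q + 1),
    (1 / (Nat.factorial i) : ℝ) * iteratedFDeriv ℝ i g x (fun _ => s)

/-- The corrected lower-level model of order `q`. -/
noncomputable def lowerModel {nh nH : ℕ} (q : ℕ)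
    (fh : EuclideanSpace ℝ (Fin nh) → ℝ) (fH : EuclideanSpace ℝ (Fin nH) → ℝ)
    (P : EuclideanSpace ℝ (Fin nH) →L[ℝ] EuclideanSpace ℝ (Fin nh))
    (xk : EuclideanSpace ℝ (Fin nh)) (x0 s : EuclideanSpace ℝ (Fin nH)) : ℝ :=
  fH (x0 + s) + ∑ i ∈ Finset.Icc 1 q,
    (1 / (Nat.factorial i) : ℝ) *
      (iteratedFDeriv ℝ i fh xk (fun _ => P s) - iteratedFDeriv ℝ i fH x0 (fun _ => s))

/-- `taylorPoly` is differentiable in `s`. -/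
lemma taylorPoly_differentiable {n : ℕ} (q : ℕ) (g : EuclideanSpace ℝ (Fin n) → ℝ)
    (x : EuclideanSpace ℝ (Fin n)) :
    Differentiable ℝ (fun s => taylorPoly q g x s) := by
  have : Differentiable ℝ (fun s : EuclideanSpace ℝ (Fin n) =>
      ∑ i ∈ Finset.range (q + 1),
        (1 / (Nat.factorial i) : ℝ) * iteratedFDeriv ℝ i g x (fun _ => s)) := by
    apply Differentiable.fun_sum
    intro i _
    apply Differentiable.const_mul
    have hdiag : Differentiable ℝ (fun s : EuclideanSpace ℝ (Fin n) =>
        (fun _ : Fin i => s)) :=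
      differentiable_pi.mpr fun _ => differentiable_id
    exact ((iteratedFDeriv ℝ i g x).contDiff.differentiable
      (one_ne_zero)).comp hdiag
  exact this

/-- Pulling a composition with a linear map through `toDual.symm` gives the adjoint. -/
lemma toDual_symm_comp {n m : ℕ}
    (L : EuclideanSpace ℝ (Fin n) →L[ℝ] ℝ)
    (P : EuclideanSpace ℝ (Fin m) →L[ℝ] EuclideanSpace ℝ (Fin n)) :
    (InnerProductSpace.toDual ℝ (EuclideanSpace ℝ (Fin m))).symm (L.comp P) =
      ContinuousLinearMap.adjoint P
        ((InnerProductSpace.toDual ℝ (EuclideanSpace ℝ (Fin n))).symm L) := by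
  apply ext_inner_right ℝ
  intro v
  rw [InnerProductSpace.toDual_symm_apply, ContinuousLinearMap.adjoint_inner_left,
    InnerProductSpace.toDual_symm_apply]
  rfl

/-- Pointwise re-expression of the lower model. -/
lemma lowerModel_eq {nh nH : ℕ} (q : ℕ) (hq : 1 ≤ q)
    (fh : EuclideanSpace ℝ (Fin nh) → ℝ) (fH : EuclideanSpace ℝ (Fin nH) → ℝ)
    (P : EuclideanSpace ℝ (Fin nH) →L[ℝ] EuclideanSpace ℝ (Fin nh))
    (xk : EuclideanSpace ℝ (Fin nh)) (x0 u : EuclideanSpace ℝ (Fin nH)) :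
    lowerModel q fh fH P xk x0 u =
      fH (x0 + u) + (taylorPoly q fh xk (P u) - fh xk)
        - (taylorPoly q fH x0 u - fH x0) := by
  have hrange : Finset.range (q + 1) = insert 0 (Finset.Icc 1 q) := by
    ext i; simp [Nat.lt_succ_iff]; omega
  have h0 : (0 : ℕ) ∉ Finset.Icc 1 q := by simp
  have hh : taylorPoly q fh xk (P u)
      = fh xk + ∑ i ∈ Finset.Icc 1 q,
          (1 / (Nat.factorial i) : ℝ) * iteratedFDeriv ℝ i fh xk (fun _ => P u) := by
    rw [taylorPoly, hrange, Finset.sum_insert h0]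
    simp [iteratedFDeriv_zero_apply]
  have hH : taylorPoly q fH x0 u
      = fH x0 + ∑ i ∈ Finset.Icc 1 q,
          (1 / (Nat.factorial i) : ℝ) * iteratedFDeriv ℝ i fH x0 (fun _ => u) := by
    rw [taylorPoly, hrange, Finset.sum_insert h0]
    simp [iteratedFDeriv_zero_apply]
  rw [lowerModel, hh, hH]
  rw [show (∑ i ∈ Finset.Icc 1 q, (1 / (Nat.factorial i) : ℝ) *
      (iteratedFDeriv ℝ i fh xk (fun _ => P u) - iteratedFDeriv ℝ i fH x0 (fun _ => u)))
    = (∑ i ∈ Finset.Icc 1 q, (1 / (Nat.factorial i) : ℝ) *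
        iteratedFDeriv ℝ i fh xk (fun _ => P u))
      - (∑ i ∈ Finset.Icc 1 q, (1 / (Nat.factorial i) : ℝ) *
        iteratedFDeriv ℝ i fH x0 (fun _ => u)) from by
      rw [← Finset.sum_sub_distrib]; exact Finset.sum_congr rfl fun i _ => mul_sub _ _ _]
  ring

theorem restricted_taylor_gradient_vs_model_gradient {nh nH : ℕ} (q : ℕ) (hq : 1 ≤ q)
    (fh : EuclideanSpace ℝ (Fin nh) → ℝ) (fH : EuclideanSpace ℝ (Fin nH) → ℝ)
    (hfh : ContDiff ℝ q fh) (hfH : ContDiff ℝ q fH)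
    (P : EuclideanSpace ℝ (Fin nH) →L[ℝ] EuclideanSpace ℝ (Fin nh))
    (xk : EuclideanSpace ℝ (Fin nh)) (x0 : EuclideanSpace ℝ (Fin nH))
    (hx0 : x0 = ContinuousLinearMap.adjoint P xk)
    (s : EuclideanSpace ℝ (Fin nH)) :
    ContinuousLinearMap.adjoint P (gradient (fun u => taylorPoly q fh xk u) (P s)) -
        gradient (fun u => lowerModel q fh fH P xk x0 u) s =
      gradient (fun u => taylorPoly q fH x0 u) s - gradient fH (x0 + s) ∧
    ‖ContinuousLinearMap.adjoint P (gradient (fun u => taylorPoly q fh xk u) (P s)) -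
        gradient (fun u => lowerModel q fh fH P xk x0 u) s‖ =
      ‖gradient fH (x0 + s) - gradient (fun u => taylorPoly q fH x0 u) s‖ := by
  have hdH : Differentiable ℝ fH := hfH.differentiable (by exact_mod_cast (show q ≠ 0 by omega))
  -- Frechet derivatives of the pieces
  set L1 := fderiv ℝ fH (x0 + s) with hL1
  set A := fderiv ℝ (fun u => taylorPoly q fh xk u) (P s) with hA
  set B := fderiv ℝ (fun u => taylorPoly q fH x0 u) s with hB
  have hdh := taylorPoly_differentiable q fh xk
  have hdHT := taylorPoly_differentiable q fH x0
  -- fderiv of the lower model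
  have h1 : HasFDerivAt (fun u => fH (x0 + u)) L1 s := by
    have := ((hdH (x0 + s)).hasFDerivAt.comp s
      ((hasFDerivAt_id s).const_add x0))
    simp at this; exact this
  have h2 : HasFDerivAt (fun u => taylorPoly q fh xk (P u)) (A.comp P) s :=
    (hdh (P s)).hasFDerivAt.comp s (P.hasFDerivAt)
  have h3 : HasFDerivAt (fun u => taylorPoly q fH x0 u) B s :=
    (hdHT s).hasFDerivAt
  have hmodel : HasFDerivAt (fun u => lowerModel q fh fH P xk x0 u)
      (L1 + A.comp P - B) s := by
    have : HasFDerivAt (fun u => fH (x0 + u) + (taylorPoly q fh xk (P u) - fh xk)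
        - (taylorPoly q fH x0 u - fH x0)) (L1 + A.comp P - B) s := by
      have := (h1.add (h2.sub_const (fh xk))).sub (h3.sub_const (fH x0))
      simp at this; exact this
    exact this.congr_of_eventuallyEq
      (Filter.Eventually.of_forall fun u => lowerModel_eq q hq fh fH P xk x0 u)
  -- compute gradients
  have hgmodel : gradient (fun u => lowerModel q fh fH P xk x0 u) s
      = gradient fH (x0 + s)
        + ContinuousLinearMap.adjoint P (gradient (fun u => taylorPoly q fh xk u) (P s))
        - gradient (fun u => taylorPoly q fH x0 u) s := by
    have : gradient (fun u => lowerModel q fh fH P xk x0 u) s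
        = (InnerProductSpace.toDual ℝ _).symm (L1 + A.comp P - B) := by
      rw [gradient, hmodel.fderiv]
    rw [this, map_sub, map_add, toDual_symm_comp]
    rfl
  have key : ContinuousLinearMap.adjoint P
        (gradient (fun u => taylorPoly q fh xk u) (P s)) -
      gradient (fun u => lowerModel q fh fH P xk x0 u) s =
      gradient (fun u => taylorPoly q fH x0 u) s - gradient fH (x0 + s) := by
    rw [hgmodel]; abel
  refine ⟨key, ?_⟩
  rw [key, norm_sub_rev]
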